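/- Truncation error estimate: with π* optimal in Π(μ_1,…,μ_K), compact sets X_k^0 ⊂ X_k satisfying μ_k(X_k∖X_k^0) ≤ ε, X^0 = X_1^0×⋯×X_K^0, and π̃^0 an optimal plan of the truncated problem with marginals of π*|_{X^0}/π*(X^0), the glued plan π̃ satisfies |∫c dπ̃ − ∫_{X^0} c dπ̃^0| ≤ 2K‖c‖_∞ ε; in particular inf over Π(μ_1,…,μ_K) of ∫c dπ is at most the truncated infimum plus 2K‖c‖_∞ ε. -/

import Mathlib

open MeasureTheory

/-- Truncation error estimate for the multimarginal Kantorovich problem. -/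
theorem truncation_error_estimate {K : ℕ} {X : Fin K → Type*}
    [∀ k, TopologicalSpace (X k)] [∀ k, PolishSpace (X k)]
    [∀ k, MeasurableSpace (X k)] [∀ k, BorelSpace (X k)]
    (μ : ∀ k, Measure (X k)) [∀ k, IsProbabilityMeasure (μ k)]
    (c : (∀ k, X k) → ℝ) (hc_cont : Continuous c)
    (M : ℝ) (hM : ∀ x, |c x| ≤ M)
    (ε : ℝ) (hε : 0 < ε) (hKε : (K : ℝ) * ε < 1)
    (X0 : ∀ k, Set (X k)) (hX0c : ∀ k, IsCompact (X0 k))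
    (hX0μ : ∀ k, (μ k) (X0 k)ᶜ ≤ ENNReal.ofReal ε)
    (πstar : Measure (∀ k, X k)) [IsProbabilityMeasure πstar]
    (hπstar : ∀ k, πstar.map (fun x => x k) = μ k)
    (hopt : ∀ π : Measure (∀ k, X k), IsProbabilityMeasure π →
        (∀ k, π.map (fun x => x k) = μ k) → ∫ x, c x ∂πstar ≤ ∫ x, c x ∂π)
    (hpos : 0 < πstar (Set.univ.pi X0))
    (πt0 : Measure (∀ k, X k)) [IsProbabilityMeasure πt0]
    (hsupp : πt0 (Set.univ.pi X0)ᶜ = 0)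
    (hmarg : ∀ k, πt0.map (fun x => x k)
        = ((πstar (Set.univ.pi X0))⁻¹ • πstar.restrict (Set.univ.pi X0)).map
            (fun x => x k))
    (hopt0 : ∀ π' : Measure (∀ k, X k), IsProbabilityMeasure π' →
        (∀ k, π'.map (fun x => x k)
          = ((πstar (Set.univ.pi X0))⁻¹ • πstar.restrict (Set.univ.pi X0)).map
              (fun x => x k)) →
        ∫ x, c x ∂πt0 ≤ ∫ x, c x ∂π') :
    |(∫ x, c x ∂((πstar (Set.univ.pi X0)) • πt0
          + πstar.restrict (Set.univ.pi X0)ᶜ))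
        - ∫ x in Set.univ.pi X0, c x ∂πt0| ≤ 2 * K * M * ε ∧
    sInf {r : ℝ | ∃ π : Measure (∀ k, X k), IsProbabilityMeasure π ∧
        (∀ k, π.map (fun x => x k) = μ k) ∧ r = ∫ x, c x ∂π}
      ≤ sInf {r : ℝ | ∃ π' : Measure (∀ k, X k), IsProbabilityMeasure π' ∧
          (∀ k, π'.map (fun x => x k)
            = ((πstar (Set.univ.pi X0))⁻¹ • πstar.restrict (Set.univ.pi X0)).map
                (fun x => x k)) ∧ r = ∫ x, c x ∂π'}
        + 2 * K * M * ε := by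

  classical
  set S := Set.univ.pi X0 with hS
  have hmeas : MeasurableSet S :=
    MeasurableSet.univ_pi (fun k => (hX0c k).isClosed.measurableSet)
  set a : ENNReal := πstar S with ha
  have ha1 : a ≤ 1 := prob_le_one
  have haT : a ≠ ⊤ := (ha1.trans_lt ENNReal.one_lt_top).ne
  have ha0 : a ≠ 0 := hpos.ne'
  -- M ≥ 0
  have hne : Nonempty (∀ k, X k) := by
    have h1 : πstar (Set.univ : Set (∀ k, X k)) ≠ 0 := by simp
    exact (MeasureTheory.nonempty_of_measure_ne_zero h1).to_subtype.map (fun x => x.1) |>.elim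
      fun x => ⟨x⟩
  have hM0 : 0 ≤ M := le_trans (abs_nonneg _) (hM hne.some)
  -- integrability for finite measures
  have hint : ∀ (ν : Measure (∀ k, X k)), IsFiniteMeasure ν → Integrable c ν := by
    intro ν hν
    exact (integrable_const M).mono' hc_cont.aestronglyMeasurable
      (Filter.Eventually.of_forall fun x => by simpa [Real.norm_eq_abs] using hM x)
  -- bound on πstar Sᶜ
  have hcompl : Sᶜ ⊆ ⋃ k, (fun x => x k) ⁻¹' (X0 k)ᶜ := by
    intro x hx
    simp only [hS, Set.mem_compl_iff, Set.mem_pi, Set.mem_univ, forall_true_left,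
      not_forall] at hx
    obtain ⟨k, hk⟩ := hx
    exact Set.mem_iUnion.mpr ⟨k, hk⟩
  have hb : πstar Sᶜ ≤ (K : ENNReal) * ENNReal.ofReal ε := by
    calc πstar Sᶜ ≤ πstar (⋃ k, (fun x => x k) ⁻¹' (X0 k)ᶜ) := measure_mono hcompl
      _ ≤ ∑ k : Fin K, πstar ((fun x => x k) ⁻¹' (X0 k)ᶜ) := measure_iUnion_fintype_le _ _
      _ ≤ ∑ _k : Fin K, ENNReal.ofReal ε := by
          refine Finset.sum_le_sum fun k _ => ?_
          rw [← Measure.map_apply (measurable_pi_apply k)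
            (hX0c k).isClosed.measurableSet.compl, hπstar k]
          exact hX0μ k
      _ = (K : ENNReal) * ENNReal.ofReal ε := by
          simp [Finset.sum_const, Finset.card_univ, mul_comm]
  have hbT : πstar Sᶜ ≠ ⊤ := (measure_ne_top _ _)
  set δ : ℝ := (πstar Sᶜ).toReal with hδdef
  have hδε : δ ≤ (K : ℝ) * ε := by
    have := ENNReal.toReal_mono (by finiteness) hb
    simpa [ENNReal.toReal_mul, ENNReal.toReal_ofReal hε.le] using this
  have hδ0 : 0 ≤ δ := ENNReal.toReal_nonneg
  have hsum : a + πstar Sᶜ = 1 := by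
    rw [ha, measure_add_measure_compl hmeas, measure_univ]
  have hAδ : a.toReal + δ = 1 := by
    rw [hδdef, ← ENNReal.toReal_add haT hbT, hsum, ENNReal.toReal_one]
  set A : ℝ := a.toReal with hAdef
  have hA0 : 0 ≤ A := ENNReal.toReal_nonneg
  -- I0 and its bound
  set I0 : ℝ := ∫ x, c x ∂πt0 with hI0
  have hI0b : |I0| ≤ M := by
    have := norm_integral_le_of_norm_le_const (f := c) (μ := πt0) (C := M)
      (Filter.Eventually.of_forall fun x => by simpa [Real.norm_eq_abs] using hM x)
    simpa [Real.norm_eq_abs] using this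
  -- set integral equals I0
  have hrestrict0 : πt0.restrict Sᶜ = 0 := Measure.restrict_eq_zero.mpr hsupp
  have hsetint : ∫ x in S, c x ∂πt0 = I0 := by
    have h1 := integral_add_compl hmeas (hint πt0 inferInstance)
    have h2 : ∫ x in Sᶜ, c x ∂πt0 = 0 := by rw [hrestrict0]; simp
    rw [h2, add_zero] at h1
    exact h1
  -- integral over glued measure
  have hfin1 : IsFiniteMeasure (a • πt0) := by
    constructor
    rw [Measure.smul_apply, smul_eq_mul, measure_univ, mul_one]
    exact haT.lt_top
  have hint1 : Integrable c (a • πt0) := (hint πt0 inferInstance).smul_measure haT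
  have hint2 : Integrable c (πstar.restrict Sᶜ) := hint _ inferInstance
  set J : ℝ := ∫ x, c x ∂(πstar.restrict Sᶜ) with hJ
  have hJb : |J| ≤ M * δ := by
    have := norm_integral_le_of_norm_le_const (f := c) (μ := πstar.restrict Sᶜ) (C := M)
      (Filter.Eventually.of_forall fun x => by simpa [Real.norm_eq_abs] using hM x)
    simpa [Real.norm_eq_abs, Measure.restrict_apply_univ, hδdef, ← hJ, Measure.real] using this
  have hglued : ∫ x, c x ∂(a • πt0 + πstar.restrict Sᶜ) = A * I0 + J := by
    rw [integral_add_measure hint1 hint2, integral_smul_measure]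
    rfl
  -- the main estimate
  have hKMε : 0 ≤ 2 * (K : ℝ) * M * ε := by positivity
  have habs : |(∫ x, c x ∂(a • πt0 + πstar.restrict Sᶜ)) - ∫ x in S, c x ∂πt0|
      ≤ 2 * K * M * ε := by
    rw [hglued, hsetint]
    have h1 : A * I0 + J - I0 = (A - 1) * I0 + J := by ring
    rw [h1]
    have h2 : |(A - 1) * I0 + J| ≤ |A - 1| * |I0| + |J| := by
      calc |(A - 1) * I0 + J| ≤ |(A - 1) * I0| + |J| := abs_add_le _ _
        _ = |A - 1| * |I0| + |J| := by rw [abs_mul]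
    have h3 : |A - 1| = δ := by rw [abs_sub_comm]; rw [abs_of_nonneg (by linarith)]; linarith
    have hMδ : |A - 1| * |I0| ≤ δ * M := by
      rw [h3]; exact mul_le_mul_of_nonneg_left hI0b hδ0
    have : |(A - 1) * I0 + J| ≤ δ * M + M * δ := le_trans h2 (by linarith)
    have h5 : δ * M + M * δ ≤ 2 * K * M * ε := by nlinarith
    linarith
  constructor
  · exact habs
  · -- second part
    set πtilde : Measure (∀ k, X k) := a • πt0 + πstar.restrict Sᶜ with hπt
    have hπtu : πtilde Set.univ = 1 := by
      rw [hπt, Measure.add_apply, Measure.smul_apply, smul_eq_mul, measure_univ, mul_one,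
        Measure.restrict_apply_univ]
      exact hsum
    have hπtprob : IsProbabilityMeasure πtilde := ⟨hπtu⟩
    have hπtmarg : ∀ k, πtilde.map (fun x => x k) = μ k := by
      intro k
      have hmk : Measurable (fun x : ∀ k, X k => x k) := measurable_pi_apply k
      rw [hπt, Measure.map_add _ _ hmk, Measure.map_smul, hmarg k, Measure.map_smul,
        smul_smul, ENNReal.mul_inv_cancel ha0 haT, one_smul,
        ← Measure.map_add _ _ hmk, Measure.restrict_add_restrict_compl hmeas, hπstar k]
    have hbdd : BddBelow {r : ℝ | ∃ π : Measure (∀ k, X k), IsProbabilityMeasure π ∧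
        (∀ k, π.map (fun x => x k) = μ k) ∧ r = ∫ x, c x ∂π} := by
      refine ⟨-M, fun r hr => ?_⟩
      obtain ⟨π, hp, _, rfl⟩ := hr
      have := norm_integral_le_of_norm_le_const (f := c) (μ := π) (C := M)
        (Filter.Eventually.of_forall fun x => by simpa [Real.norm_eq_abs] using hM x)
      have h2 : |∫ x, c x ∂π| ≤ M := by simpa [Real.norm_eq_abs] using this
      linarith [(abs_le.mp h2).1]
    have hmem : (∫ x, c x ∂πtilde) ∈ {r : ℝ | ∃ π : Measure (∀ k, X k),
        IsProbabilityMeasure π ∧ (∀ k, π.map (fun x => x k) = μ k) ∧ r = ∫ x, c x ∂π} :=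
      ⟨πtilde, hπtprob, hπtmarg, rfl⟩
    have hle1 : sInf {r : ℝ | ∃ π : Measure (∀ k, X k), IsProbabilityMeasure π ∧
        (∀ k, π.map (fun x => x k) = μ k) ∧ r = ∫ x, c x ∂π} ≤ ∫ x, c x ∂πtilde :=
      csInf_le hbdd hmem
    have hle2 : ∫ x, c x ∂πtilde ≤ I0 + 2 * K * M * ε := by
      have := (abs_le.mp habs).2
      rw [hsetint] at this
      linarith [this]
    have hle3 : I0 ≤ sInf {r : ℝ | ∃ π' : Measure (∀ k, X k), IsProbabilityMeasure π' ∧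
        (∀ k, π'.map (fun x => x k)
          = ((πstar (Set.univ.pi X0))⁻¹ • πstar.restrict (Set.univ.pi X0)).map
              (fun x => x k)) ∧ r = ∫ x, c x ∂π'} := by
      refine le_csInf ⟨I0, πt0, inferInstance, hmarg, rfl⟩ ?_
      rintro r ⟨π', h1, h2, rfl⟩
      exact hopt0 π' h1 h2
    linarith
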